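/- Let h : ℝ → ℝ be a C² solution of the equation h'' + (1/2)(1−a²) sin(2h)/(a²cos²h+sin²h) · h'² − (1−a²) tanh(x)/(a²+sinh²x) · h' − (k−2) tanh(x) h' + (d(d+k−2)/2)(a² sech²x + tanh²x)/(a²cos²h+sin²h) · sin(2h) = 0. Define W(x) = h'(x)² (a²cos²h(x)+sin²h(x))/(a² sech²x + tanh²x) + d(d+k−2) sin²h(x). Then W'(x) = 2(k−2) tanh(x) h'(x)² (a²cos²h(x)+sin²h(x))/(a² sech²x + tanh²x) for all x. -/

import Mathlib

open Real

set_option maxHeartbeats 1000000 in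
/-- If h is a C² solution of the ellipsoid Euler–Lagrange ODE, then the Lyapunov
function W(x) = h'²(a²cos²h+sin²h)/(a²sech²x+tanh²x) + d(d+k−2)sin²h satisfies
W'(x) = 2(k−2)tanh(x) h'²(a²cos²h+sin²h)/(a²sech²x+tanh²x). -/

theorem stmt2 (k d : ℕ) (hk : 3 ≤ k) (hd : 1 ≤ d) (a : ℝ) (ha : a ≠ 0)
    (h : ℝ → ℝ) (hreg : ContDiff ℝ 2 h)
    (hODE : ∀ x : ℝ, deriv (deriv h) x
        + (1 / 2) * (1 - a ^ 2) * Real.sin (2 * h x)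
            / (a ^ 2 * Real.cos (h x) ^ 2 + Real.sin (h x) ^ 2) * (deriv h x) ^ 2
        - (1 - a ^ 2) * Real.tanh x / (a ^ 2 + Real.sinh x ^ 2) * deriv h x
        - ((k : ℝ) - 2) * Real.tanh x * deriv h x
        + ((d : ℝ) * ((d : ℝ) + (k : ℝ) - 2) / 2)
            * (a ^ 2 * (1 / Real.cosh x) ^ 2 + Real.tanh x ^ 2)
            / (a ^ 2 * Real.cos (h x) ^ 2 + Real.sin (h x) ^ 2) * Real.sin (2 * h x) = 0) :
    ∀ x : ℝ,
      deriv (fun y => (deriv h y) ^ 2 * (a ^ 2 * Real.cos (h y) ^ 2 + Real.sin (h y) ^ 2)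
          / (a ^ 2 * (1 / Real.cosh y) ^ 2 + Real.tanh y ^ 2)
          + (d : ℝ) * ((d : ℝ) + (k : ℝ) - 2) * Real.sin (h y) ^ 2) x
        = 2 * ((k : ℝ) - 2) * Real.tanh x * (deriv h x) ^ 2
            * (a ^ 2 * Real.cos (h x) ^ 2 + Real.sin (h x) ^ 2)
            / (a ^ 2 * (1 / Real.cosh x) ^ 2 + Real.tanh x ^ 2) := by
  intro x
  have h1 : Differentiable ℝ h := hreg.differentiable (by norm_num)
  have hreg' : ContDiff ℝ ((1:ℕ∞)+1) h := by exact_mod_cast hreg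
  have h2 : Differentiable ℝ (deriv h) :=
    (contDiff_succ_iff_deriv.mp hreg').2.2.differentiable (by norm_num)
  have hch : (0:ℝ) < Real.cosh x := Real.cosh_pos x
  have ha2 : (0:ℝ) < a ^ 2 := by positivity
  have hP : 0 < a ^ 2 * Real.cos (h x) ^ 2 + Real.sin (h x) ^ 2 := by
    nlinarith [Real.sin_sq_add_cos_sq (h x), sq_nonneg (Real.sin (h x)),
      sq_nonneg (Real.cos (h x)), mul_nonneg ha2.le (sq_nonneg (Real.sin (h x))),
      mul_nonneg ha2.le (sq_nonneg (Real.cos (h x)))]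
  have hQ : 0 < a ^ 2 * (1 / Real.cosh x) ^ 2 + (Real.sinh x / Real.cosh x) ^ 2 := by
    have : 0 < a ^ 2 * (1 / Real.cosh x) ^ 2 := by positivity
    nlinarith [sq_nonneg (Real.sinh x / Real.cosh x)]
  have hAS : 0 < a ^ 2 + Real.sinh x ^ 2 := by
    nlinarith [sq_nonneg (Real.sinh x)]
  -- derivatives
  have Hh : HasDerivAt h (deriv h x) x := (h1 x).hasDerivAt
  have Hu : HasDerivAt (deriv h) (deriv (deriv h) x) x := (h2 x).hasDerivAt
  have Hcos : HasDerivAt (fun y => Real.cos (h y)) (-Real.sin (h x) * deriv h x) x :=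
    (Real.hasDerivAt_cos (h x)).comp x Hh
  have Hsin : HasDerivAt (fun y => Real.sin (h y)) (Real.cos (h x) * deriv h x) x :=
    (Real.hasDerivAt_sin (h x)).comp x Hh
  have HP := ((Hcos.pow 2).const_mul (a^2)).add (Hsin.pow 2)
  have Hcosh : HasDerivAt Real.cosh (Real.sinh x) x := Real.hasDerivAt_cosh x
  have Hsinh : HasDerivAt Real.sinh (Real.cosh x) x := Real.hasDerivAt_sinh x
  have Hinv := (hasDerivAt_const x (1:ℝ)).div Hcosh hch.ne'
  have Hsc : HasDerivAt (fun y => Real.sinh y / Real.cosh y) (1 / Real.cosh x ^ 2) x := by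
    have H := Hsinh.div Hcosh hch.ne'
    refine H.congr_deriv ?_
    have hid := Real.cosh_sq_sub_sinh_sq x
    congr 1
    nlinarith [hid]
  have HQ := ((Hinv.pow 2).const_mul (a^2)).add (Hsc.pow 2)
  have HN := (Hu.pow 2).mul HP
  have HW := (HN.div HQ hQ.ne').add
    ((Hsin.pow 2).const_mul ((d : ℝ) * ((d : ℝ) + (k : ℝ) - 2)))
  have key := hODE x
  simp only [Real.tanh_eq_sinh_div_cosh, Real.sin_two_mul] at key ⊢
  erw [HW.deriv]
  simp only [Pi.add_apply, Pi.mul_apply, Pi.pow_apply, Pi.div_apply]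
  have hv : deriv (deriv h) x =
      - (1 / 2 * (1 - a ^ 2) * (2 * Real.sin (h x) * Real.cos (h x))
          / (a ^ 2 * Real.cos (h x) ^ 2 + Real.sin (h x) ^ 2) * deriv h x ^ 2)
      + (1 - a ^ 2) * (Real.sinh x / Real.cosh x) / (a ^ 2 + Real.sinh x ^ 2) * deriv h x
      + ((k : ℝ) - 2) * (Real.sinh x / Real.cosh x) * deriv h x
      - ((d : ℝ) * ((d : ℝ) + (k : ℝ) - 2) / 2)
          * (a ^ 2 * (1 / Real.cosh x) ^ 2 + (Real.sinh x / Real.cosh x) ^ 2)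
          / (a ^ 2 * Real.cos (h x) ^ 2 + Real.sin (h x) ^ 2)
          * (2 * Real.sin (h x) * Real.cos (h x)) := by linarith
  rw [hv]
  field_simp
  linear_combination (2 * deriv h x ^ 2 * Real.cosh x * Real.sinh x * (a ^ 2 * Real.sin (h x) ^ 2 - a ^ 2 * Real.cos (h x) ^ 2 + a ^ 4 * Real.cos (h x) ^ 2 - Real.sin (h x) ^ 2)) * (mul_inv_cancel₀ hch.ne')
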